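/- Let A be a real d' × d matrix with full column rank, let Σ be a symmetric positive definite real d × d matrix, let m ≤ d, and let H⊥ be a real d' × d' symmetric idempotent matrix whose column space equals the orthogonal complement in ℝ^{d'} of the span of the first m columns of A. Then the null space of H⊥ A Σ Aᵀ H⊥ equals the sum of the span of the first m columns of A and the orthogonal complement of the column space of A; that is, H⊥ A Σ Aᵀ H⊥ x = 0 if and only if x ∈ span{A_{·,1},…,A_{·,m}} + (col A)^⊥. -/

import Mathlib

open Matrix

-- auxiliary: double orthogonal via EuclideanSpace
lemma double_orth {n : ℕ} (s : Set (Fin n → ℝ)) (u : Fin n → ℝ)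
    (h : ∀ w : Fin n → ℝ, (∀ v ∈ s, w ⬝ᵥ v = 0) → u ⬝ᵥ w = 0) :
    u ∈ Submodule.span ℝ s := by
  let s' : Set (EuclideanSpace ℝ (Fin n)) := WithLp.toLp 2 '' s
  let W : Submodule ℝ (EuclideanSpace ℝ (Fin n)) := Submodule.span ℝ s'
  have hu : (WithLp.toLp 2 u : EuclideanSpace ℝ (Fin n)) ∈ Wᗮᗮ := by
    intro w hw
    have hws : ∀ v ∈ s, (WithLp.ofLp w : Fin n → ℝ) ⬝ᵥ v = 0 := by
      intro v hv
      have := hw (WithLp.toLp 2 v) (Submodule.subset_span ⟨v, hv, rfl⟩)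
      simpa [PiLp.inner_apply, dotProduct, mul_comm] using this
    have := h (WithLp.ofLp w) hws
    simpa [PiLp.inner_apply, dotProduct, mul_comm, real_inner_comm] using this
  rw [Submodule.orthogonal_orthogonal] at hu
  have hW : W = (Submodule.span ℝ s).map (WithLp.linearEquiv 2 ℝ (Fin n → ℝ)).symm.toLinearMap := by
    rw [← Submodule.span_image]; rfl
  rw [hW] at hu
  obtain ⟨y, hy, hyu⟩ := hu
  have : y = u := congrArg WithLp.ofLp hyu
  exact this ▸ hy

/-- Under the setup of Statement 5, the null space of `H A S Aᵀ H`
is the sum of the span of the first `m` columns of `A` and the orthogonal complement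
of the column space of `A`. -/
theorem stmt6 (d' d m : ℕ) (hm : m ≤ d)
    (A : Matrix (Fin d') (Fin d) ℝ)
    (hA : LinearIndependent ℝ (fun j : Fin d => fun i : Fin d' => A i j))
    (S : Matrix (Fin d) (Fin d) ℝ) (hS : S.PosDef)
    (H : Matrix (Fin d') (Fin d') ℝ) (hsymm : H.IsSymm) (hidem : H * H = H)
    (hrange : ∀ x : Fin d' → ℝ,
      (∃ y : Fin d' → ℝ, H *ᵥ y = x) ↔
        ∀ j : Fin m, x ⬝ᵥ (fun i : Fin d' => A i (Fin.castLE hm j)) = 0) :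
    ∀ x : Fin d' → ℝ,
      (H * A * S * Aᵀ * H) *ᵥ x = 0 ↔
        ∃ u v : Fin d' → ℝ,
          u ∈ Submodule.span ℝ
            (Set.range fun j : Fin m => fun i : Fin d' => A i (Fin.castLE hm j)) ∧
          (∀ c : Fin d → ℝ, v ⬝ᵥ (A *ᵥ c) = 0) ∧
          x = u + v := by
  have hHT : Hᵀ = H := hsymm
  intro x
  constructor
  · intro hx
    -- key: Aᵀ *ᵥ (H *ᵥ x) = 0
    set y : Fin d → ℝ := Aᵀ *ᵥ (H *ᵥ x) with hy
    have hquad : y ⬝ᵥ (S *ᵥ y) = 0 := by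
      have h1 : x ⬝ᵥ ((H * A * S * Aᵀ * H) *ᵥ x) = 0 := by rw [hx]; simp
      calc y ⬝ᵥ (S *ᵥ y) = x ⬝ᵥ ((H * A * S * Aᵀ * H) *ᵥ x) := by
            simp only [hy, ← mulVec_mulVec, dotProduct_mulVec, ← vecMul_vecMul]
            rw [show x ᵥ* H = H *ᵥ x by rw [← hHT, vecMul_transpose, hHT],
              show (H *ᵥ x) ᵥ* A = Aᵀ *ᵥ (H *ᵥ x) from (mulVec_transpose A _).symm]
        _ = 0 := h1
    have hy0 : y = 0 := by
      by_contra hne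
      have := hS.dotProduct_mulVec_pos hne
      simp only [star_trivial] at this
      rw [hquad] at this; exact lt_irrefl 0 this
    refine ⟨x - H *ᵥ x, H *ᵥ x, ?_, ?_, by abel⟩
    · apply double_orth
      intro w hw
      have hw' : ∀ j : Fin m, w ⬝ᵥ (fun i : Fin d' => A i (Fin.castLE hm j)) = 0 := by
        intro j; exact hw _ ⟨j, rfl⟩
      obtain ⟨z, hz⟩ := (hrange w).2 hw'
      have : (x - H *ᵥ x) ⬝ᵥ (H *ᵥ z) = 0 := by
        rw [sub_dotProduct]
        have : (H *ᵥ x) ⬝ᵥ (H *ᵥ z) = x ⬝ᵥ (H *ᵥ z) := by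
          rw [dotProduct_mulVec (H *ᵥ x) H z, ← mulVec_transpose, hHT, mulVec_mulVec, hidem,
            dotProduct_mulVec x H z, ← mulVec_transpose, hHT]
        rw [this, sub_self]
      rwa [hz] at this
    · intro c
      rw [dotProduct_mulVec, show (H *ᵥ x) ᵥ* A = Aᵀ *ᵥ (H *ᵥ x) by rw [mulVec_transpose],
        ← hy, hy0, zero_dotProduct]
  · rintro ⟨u, v, hu, hv, rfl⟩
    -- H *ᵥ u = 0
    have hHu : H *ᵥ u = 0 := by
      have hker : Submodule.span ℝ
          (Set.range fun j : Fin m => fun i : Fin d' => A i (Fin.castLE hm j)) ≤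
          LinearMap.ker H.mulVecLin := by
        rw [Submodule.span_le]
        rintro _ ⟨j, rfl⟩
        simp only [SetLike.mem_coe, LinearMap.mem_ker, mulVecLin_apply]
        funext i
        have h1 : (H *ᵥ (Pi.single i 1 : Fin d' → ℝ)) ⬝ᵥ
            (fun i' : Fin d' => A i' (Fin.castLE hm j)) = 0 := (hrange _).1 ⟨_, rfl⟩ j
        have h2 : (Pi.single i 1 : Fin d' → ℝ) ⬝ᵥ
            (H *ᵥ (fun i' : Fin d' => A i' (Fin.castLE hm j))) = 0 := by
          rw [dotProduct_mulVec, ← mulVec_transpose, hHT]; exact h1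
        simpa using h2
      have := hker hu
      simpa using this
    have hHv : H *ᵥ v = v := by
      have hv' : ∀ j : Fin m, v ⬝ᵥ (fun i : Fin d' => A i (Fin.castLE hm j)) = 0 := by
        intro j
        have := hv (Pi.single (Fin.castLE hm j) 1)
        simp [mulVec_single] at this; exact this
      obtain ⟨z, hz⟩ := (hrange v).2 hv'
      rw [← hz, mulVec_mulVec, hidem]
    have hHx : H *ᵥ (u + v) = v := by rw [mulVec_add, hHu, hHv, zero_add]
    have hAv : Aᵀ *ᵥ v = 0 := by
      funext j
      have := hv (Pi.single j 1)
      simp only [mulVec_single] at this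
      simpa [mulVec, dotProduct, mul_comm] using this
    rw [show H * A * S * Aᵀ * H = H * A * S * Aᵀ * H from rfl, ← mulVec_mulVec, hHx,
      ← mulVec_mulVec, hAv]
    simp [mulVec_mulVec]
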